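/- Stability of intrinsically stable networks under specialization: let Λ be the (ℓ+m)×(ℓ+m) matrix M of the single-component specialization construction with all blocks U, Z, Y_1,…,Y_y, W_1,…,W_w having nonnegative entries, and suppose ρ(Λ) < 1 (intrinsic stability). Let Λ̂ = M̂ be its specialization, of size N = ℓ + y·w·m. Let X_1, …, X_N be nonempty closed subsets of ℝ, let 𝒴 = {x ∈ ℝ^N : x_i ∈ X_i for all i}, and let G : ℝ^N → ℝ^N map 𝒴 into itself and satisfy |G_i(x) − G_i(y)| ≤ Σ_{j=1}^N Λ̂_{ij} |x_j − y_j| for all x, y ∈ 𝒴 and all i. Then ρ(Λ̂) < 1 and G is globally stable on 𝒴: there exists x* ∈ 𝒴 with G(x*) = x* such that for every x⁰ ∈ 𝒴 the iterates G^k(x⁰) converge to x*. -/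

import Mathlib

open Matrix

/-- The single-component specialization `M̂` of the block matrix `M = [[U, ΣY_i],[ΣW_j, Z]]`:
indices `B ⊕ (P × C)` with `P = Fin y × Fin w`; its `(B,B)` block is `U`, its
`(B, {(i,j)}×C)` block is `Y i`, its `({(i,j)}×C, B)` block is `W j`, its diagonal
`({(i,j)}×C, {(i,j)}×C)` blocks are `Z`, and all blocks between distinct copies are zero. -/
def specialization {l m y w : ℕ}
    (U : Matrix (Fin l) (Fin l) ℝ) (Z : Matrix (Fin m) (Fin m) ℝ)
    (Y : Fin y → Matrix (Fin l) (Fin m) ℝ) (W : Fin w → Matrix (Fin m) (Fin l) ℝ) :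
    Matrix (Fin l ⊕ ((Fin y × Fin w) × Fin m)) (Fin l ⊕ ((Fin y × Fin w) × Fin m)) ℝ :=
  fun r c =>
    match r, c with
    | Sum.inl a, Sum.inl b => U a b
    | Sum.inl a, Sum.inr ((i, _), c') => Y i a c'
    | Sum.inr ((_, j), r'), Sum.inl b => W j r' b
    | Sum.inr (p, r'), Sum.inr (q, c') => if p = q then Z r' c' else 0

/-- The original block matrix `M = [[U, Y],[W, Z]]` with `Y = ΣY_i`, `W = ΣW_j`. -/
def origMatrix {l m y w : ℕ}
    (U : Matrix (Fin l) (Fin l) ℝ) (Z : Matrix (Fin m) (Fin m) ℝ)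
    (Y : Fin y → Matrix (Fin l) (Fin m) ℝ) (W : Fin w → Matrix (Fin m) (Fin l) ℝ) :
    Matrix (Fin l ⊕ Fin m) (Fin l ⊕ Fin m) ℝ :=
  Matrix.fromBlocks U (∑ i, Y i) (∑ j, W j) Z

/-- The spectral radius of a square real matrix: the maximum of `|λ|` over the complex
roots `λ` of its characteristic polynomial (and `0` if there are none). -/
noncomputable def specRad {n : Type*} [Fintype n] [DecidableEq n]
    (A : Matrix n n ℝ) : ℝ :=
  (((Matrix.charpoly (A.map Complex.ofReal)).roots).map (fun z : ℂ => ‖z‖)).fold max 0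


section AuxHelpers
lemma eval_charpoly'' {n : Type*} [Fintype n] [DecidableEq n] {R : Type*} [CommRing R] (M : Matrix n n R) (μ : R) :
    M.charpoly.eval μ = (Matrix.diagonal (fun _ => μ) - M).det := by
  rw [Matrix.charpoly, ← Polynomial.coe_evalRingHom, RingHom.map_det]
  congr 1
  ext i j
  by_cases h : i = j <;>
    simp [Matrix.charmatrix_apply, Matrix.diagonal_apply, h]


variable {n : Type*} [Fintype n] [DecidableEq n]

lemma exists_eigenvec {A : Matrix n n ℝ} {μ : ℂ}
    (h : μ ∈ ((A.map Complex.ofReal).charpoly).roots) :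
    ∃ x : n → ℂ, x ≠ 0 ∧ (A.map Complex.ofReal) *ᵥ x = μ • x := by
  have hroot : ((A.map Complex.ofReal).charpoly).IsRoot μ :=
    Polynomial.isRoot_of_mem_roots h
  have hdet : (Matrix.diagonal (fun _ => μ) - A.map Complex.ofReal).det = 0 := by
    rw [← eval_charpoly'']; exact hroot
  obtain ⟨x, hx0, hx⟩ := (Matrix.exists_mulVec_eq_zero_iff).mpr hdet
  refine ⟨x, hx0, ?_⟩
  have h2 : Matrix.diagonal (fun _ => μ) *ᵥ x - (A.map Complex.ofReal) *ᵥ x = 0 := by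
    rw [← Matrix.sub_mulVec]; exact hx
  have h3 : (A.map Complex.ofReal) *ᵥ x = Matrix.diagonal (fun _ => μ) *ᵥ x :=
    (sub_eq_zero.mp h2).symm
  rw [h3]
  ext i
  simp [Matrix.mulVec_diagonal, Pi.smul_apply, smul_eq_mul]

lemma abs_eigen_ineq {A : Matrix n n ℝ} (hA : ∀ i j, 0 ≤ A i j) {μ : ℂ} {x : n → ℂ}
    (hx : (A.map Complex.ofReal) *ᵥ x = μ • x) (i : n) :
    ‖μ‖ * ‖x i‖ ≤ ∑ j, A i j * ‖x j‖ := by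
  have h1 : μ * x i = ∑ j, (A i j : ℂ) * x j := by
    have := congrFun hx i
    simpa [Matrix.mulVec, dotProduct, Matrix.map_apply] using this.symm
  calc ‖μ‖ * ‖x i‖ = ‖μ * x i‖ := (norm_mul _ _).symm
    _ = ‖∑ j, (A i j : ℂ) * x j‖ := by rw [h1]
    _ ≤ ∑ j, ‖(A i j : ℂ) * x j‖ := by
        simpa using (norm_sum_le Finset.univ (fun j => (A i j : ℂ) * x j))
    _ = ∑ j, A i j * ‖x j‖ := by
        refine Finset.sum_congr rfl fun j _ => ?_
        rw [norm_mul, Complex.norm_real, Real.norm_eq_abs, abs_of_nonneg (hA i j)]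

lemma ratio_lt_one {A : Matrix n n ℝ} {v u : n → ℝ} (hv : ∀ i, 0 < v i)
    (hAv : ∀ i, (A *ᵥ v) i < v i) (hA : ∀ i j, 0 ≤ A i j)
    (hu : ∀ i, 0 ≤ u i) (hune : u ≠ 0) {r : ℝ}
    (hru : ∀ i, r * u i ≤ (A *ᵥ u) i) : r < 1 := by
  obtain ⟨i1, hi1⟩ := Function.ne_iff.mp hune
  haveI : Nonempty n := ⟨i1⟩
  obtain ⟨i0, -, hmax⟩ := Finset.exists_max_image Finset.univ (fun i => u i / v i)
    ⟨i1, Finset.mem_univ i1⟩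
  set θ := u i0 / v i0 with hθ
  have hu1 : 0 < u i1 := lt_of_le_of_ne (hu i1) (Ne.symm (by simpa using hi1))
  have hθpos : 0 < θ := lt_of_lt_of_le (div_pos hu1 (hv i1)) (hmax i1 (Finset.mem_univ i1))
  have hub : ∀ j, u j ≤ θ * v j := by
    intro j
    have := hmax j (Finset.mem_univ j)
    rw [div_le_iff₀ (hv j)] at this
    linarith [this]
  have hui0 : u i0 = θ * v i0 := (div_mul_cancel₀ _ (hv i0).ne').symm
  have key : r * (θ * v i0) < θ * v i0 := by
    calc r * (θ * v i0) = r * u i0 := by rw [hui0]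
      _ ≤ (A *ᵥ u) i0 := hru i0
      _ ≤ θ * (A *ᵥ v) i0 := by
          simp only [Matrix.mulVec, dotProduct]
          rw [Finset.mul_sum]
          refine Finset.sum_le_sum fun j _ => ?_
          have := mul_le_mul_of_nonneg_left (hub j) (hA i0 j)
          calc A i0 j * u j ≤ A i0 j * (θ * v j) := this
            _ = θ * (A i0 j * v j) := by ring
      _ < θ * v i0 := by
          exact (mul_lt_mul_iff_right₀ hθpos).mpr (hAv i0)
  have hpos : 0 < θ * v i0 := mul_pos hθpos (hv i0)
  nlinarith [key, hpos]


lemma le_fold_max {s : Multiset ℝ} {a : ℝ} (h : a ∈ s) : a ≤ s.fold max 0 := by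
  induction s using Multiset.induction_on with
  | empty => simp at h
  | cons b t ih =>
    rw [Multiset.fold_cons_left]
    rcases Multiset.mem_cons.mp h with h | h
    · subst h; exact le_max_left _ _
    · exact le_trans (ih h) (le_max_right _ _)

variable {n : Type*} [Fintype n] [DecidableEq n]
variable {n : Type*} [Fintype n] [DecidableEq n]

lemma pow_entry_nonneg (A : Matrix n n ℝ) (hA : ∀ i j, 0 ≤ A i j) (k : ℕ) :
    ∀ i j, 0 ≤ (A ^ k) i j := by
  induction k with
  | zero => intro i j; simp [Matrix.one_apply]; split <;> norm_num
  | succ k ih =>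
    intro i j
    rw [pow_succ, Matrix.mul_apply]
    exact Finset.sum_nonneg fun t _ => mul_nonneg (ih i t) (hA t j)

lemma fold_max_nonneg (s : Multiset ℝ) : 0 ≤ s.fold max 0 := by
  induction s using Multiset.induction_on with
  | empty => simp
  | cons b t ih => rw [Multiset.fold_cons_left]; exact le_trans ih (le_max_right _ _)

lemma specRad_nonneg {n : Type*} [Fintype n] [DecidableEq n] (A : Matrix n n ℝ) :
    0 ≤ specRad A := fold_max_nonneg _

lemma exists_subinv [Nonempty n] (A : Matrix n n ℝ) (hA : ∀ i j, 0 ≤ A i j)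
    (h : specRad A < 1) : ∃ v : n → ℝ, (∀ i, 0 < v i) ∧ ∀ i, (A *ᵥ v) i < v i := by
  letI : NormedRing (Matrix n n ℂ) := Matrix.linftyOpNormedRing
  letI : NormedAlgebra ℂ (Matrix n n ℂ) := Matrix.linftyOpNormedAlgebra
  haveI : CompleteSpace (Matrix n n ℂ) := by
    change CompleteSpace (n → n → ℂ); infer_instance
  set B := A.map Complex.ofReal with hB
  have hspec : ∀ μ ∈ spectrum ℂ B, (‖μ‖₊ : ENNReal) ≤ ENNReal.ofReal (specRad A) := by
    intro μ hμ
    rw [spectrum.mem_iff] at hμ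
    have hEq : (algebraMap ℂ (Matrix n n ℂ)) μ - B = Matrix.diagonal (fun _ : n => μ) - B := by
      ext i j
      by_cases hij : i = j <;>
        simp [Matrix.sub_apply, Matrix.algebraMap_matrix_apply, hij, Matrix.diagonal_apply]
    rw [hEq] at hμ
    have hdet : (Matrix.diagonal (fun _ : n => μ) - B).det = 0 := by
      by_contra hne
      exact hμ ((Matrix.isUnit_iff_isUnit_det _).mpr (isUnit_iff_ne_zero.mpr hne))
    have hroot : μ ∈ (Matrix.charpoly B).roots := by
      rw [Polynomial.mem_roots (Matrix.charpoly_monic B).ne_zero]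
      rw [Polynomial.IsRoot, eval_charpoly'']; exact hdet
    have habs : ‖μ‖ ≤ specRad A :=
      le_fold_max (Multiset.mem_map_of_mem _ hroot)
    rw [← enorm_eq_nnnorm, ← ofReal_norm]
    exact ENNReal.ofReal_le_ofReal (by simpa using habs)
  have hsp : spectralRadius ℂ B < 1 := by
    have h1 : spectralRadius ℂ B ≤ ENNReal.ofReal (specRad A) := by
      rw [spectralRadius]
      exact iSup₂_le hspec
    refine lt_of_le_of_lt h1 ?_
    rw [← ENNReal.ofReal_one]
    exact (ENNReal.ofReal_lt_ofReal_iff_of_nonneg (specRad_nonneg A)).mpr h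
  have htend := spectrum.pow_nnnorm_pow_one_div_tendsto_nhds_spectralRadius B
  obtain ⟨K, hK1, hK2⟩ :=
    ((htend.eventually_lt_const hsp).and (Filter.eventually_ge_atTop 1)).exists
  have hKpos : (0:ℝ) < (K:ℝ) := by exact_mod_cast hK2
  have heq : ((‖B ^ K‖₊ : ENNReal) ^ (1/(K:ℝ))) ^ (K:ℝ) = (‖B ^ K‖₊ : ENNReal) := by
    rw [← ENNReal.rpow_mul, one_div, inv_mul_cancel₀ (ne_of_gt hKpos), ENNReal.rpow_one]
  have hnormK : (‖B ^ K‖₊ : ENNReal) < 1 := heq ▸ ENNReal.rpow_lt_one hK1 hKpos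
  have hBK : B ^ K = (A ^ K).map Complex.ofReal := by
    have hBR : B = Complex.ofRealHom.mapMatrix A := by
      ext i j; simp [hB]
    rw [hBR, ← map_pow]
    ext i j; simp
  have hrow : ∀ i, ∑ j, (A ^ K) i j < 1 := by
    intro i
    have h1 : ∑ j, ‖(B ^ K) i j‖₊ ≤ ‖B ^ K‖₊ := by
      rw [Matrix.linfty_opNNNorm_def]
      exact Finset.le_sup (f := fun i => ∑ j, ‖(B ^ K) i j‖₊) (Finset.mem_univ i)
    have h2 : (∑ j, ‖(B ^ K) i j‖₊ : NNReal) < 1 := lt_of_le_of_lt h1 (by exact_mod_cast hnormK)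
    have h3 : ∑ j, (A ^ K) i j = ((∑ j, ‖(B ^ K) i j‖₊ : NNReal) : ℝ) := by
      push_cast
      refine Finset.sum_congr rfl fun j _ => ?_
      rw [hBK]
      simp [Matrix.map_apply, Complex.norm_real, Real.norm_eq_abs,
        abs_of_nonneg (pow_entry_nonneg A hA K i j)]
    rw [h3]
    exact_mod_cast h2
  set e : n → ℝ := fun _ => 1 with he
  set v : n → ℝ := ∑ k ∈ Finset.range K, ((A ^ k) *ᵥ e) with hv
  have hterm_nonneg : ∀ k i, 0 ≤ ((A ^ k) *ᵥ e) i := by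
    intro k i
    refine Finset.sum_nonneg fun j _ => ?_
    simpa [he] using pow_entry_nonneg A hA k i j
  have hv_apply : ∀ i, v i = ∑ k ∈ Finset.range K, ((A ^ k) *ᵥ e) i := by
    intro i; rw [hv, Finset.sum_apply]
  have hv_ge : ∀ i, 1 ≤ v i := by
    intro i
    have h0 : ((A ^ 0) *ᵥ e) i = 1 := by simp [he, Matrix.one_mulVec]
    rw [hv_apply]
    calc (1:ℝ) = ((A ^ 0) *ᵥ e) i := h0.symm
      _ ≤ _ := Finset.single_le_sum (fun k _ => hterm_nonneg k i) (Finset.mem_range.mpr hK2)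
  refine ⟨v, fun i => lt_of_lt_of_le one_pos (hv_ge i), fun i => ?_⟩
  have hswap : A *ᵥ v = ∑ k ∈ Finset.range K, ((A ^ (k+1)) *ᵥ e) := by
    rw [hv, ← Matrix.mulVecLin_apply, map_sum]
    refine Finset.sum_congr rfl fun k _ => ?_
    rw [Matrix.mulVecLin_apply, Matrix.mulVec_mulVec, ← pow_succ']
  have hAK : ((A ^ K) *ᵥ e) i < 1 := by
    have : ((A ^ K) *ᵥ e) i = ∑ j, (A ^ K) i j := by
      simp [he, Matrix.mulVec, dotProduct]
    rw [this]; exact hrow i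
  have h0 : ((A ^ 0) *ᵥ e) i = 1 := by simp [he, Matrix.one_mulVec]
  have hsum : (A *ᵥ v) i = v i + ((A ^ K) *ᵥ e) i - 1 := by
    rw [hswap, Finset.sum_apply]
    have := Finset.sum_range_succ' (fun k => ((A ^ k) *ᵥ e) i) K
    rw [Finset.sum_range_succ] at this
    rw [hv_apply]
    linarith [this, h0]
  rw [hsum]
  linarith [hAK]

lemma fold_max_lt {s : Multiset ℝ} {c : ℝ} (h0 : 0 < c) (h : ∀ a ∈ s, a < c) :
    s.fold max 0 < c := by
  induction s using Multiset.induction_on with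
  | empty => simpa using h0
  | cons b t ih =>
    rw [Multiset.fold_cons_left]
    exact max_lt (h b (Multiset.mem_cons_self _ _)) (ih fun a ha => h a (Multiset.mem_cons_of_mem ha))


end AuxHelpers

/-- stability of intrinsically stable networks under specialization.  If the
stability matrix `Λ = M` is nonnegative with `ρ(Λ) < 1`, then its specialization
`Λ̂ = M̂` also satisfies `ρ(Λ̂) < 1`, and any network map `G` on the specialized index set
whose variation is bounded by `Λ̂` is globally stable. -/
theorem intrinsic_stability_preserved_by_specialization
    {l m y w : ℕ} (hl : 1 ≤ l) (hm : 1 ≤ m) (hy : 1 ≤ y) (hw : 1 ≤ w)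
    (U : Matrix (Fin l) (Fin l) ℝ) (Z : Matrix (Fin m) (Fin m) ℝ)
    (Y : Fin y → Matrix (Fin l) (Fin m) ℝ) (W : Fin w → Matrix (Fin m) (Fin l) ℝ)
    (hU : ∀ a b, 0 ≤ U a b) (hZ : ∀ a b, 0 ≤ Z a b)
    (hY : ∀ i a b, 0 ≤ Y i a b) (hW : ∀ j a b, 0 ≤ W j a b)
    (hρ : specRad (origMatrix U Z Y W) < 1)
    (X : (Fin l ⊕ ((Fin y × Fin w) × Fin m)) → Set ℝ)
    (hXne : ∀ i, (X i).Nonempty) (hXcl : ∀ i, IsClosed (X i))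
    (G : ((Fin l ⊕ ((Fin y × Fin w) × Fin m)) → ℝ) → ((Fin l ⊕ ((Fin y × Fin w) × Fin m)) → ℝ))
    (hG : ∀ x, (∀ i, x i ∈ X i) → ∀ i, G x i ∈ X i)
    (hLip : ∀ x y', (∀ i, x i ∈ X i) → (∀ i, y' i ∈ X i) →
      ∀ i, |G x i - G y' i| ≤ ∑ j, specialization U Z Y W i j * |x j - y' j|) :
    specRad (specialization U Z Y W) < 1
    ∧ ∃ xstar, (∀ i, xstar i ∈ X i) ∧ G xstar = xstar ∧
        ∀ x0, (∀ i, x0 i ∈ X i) →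
          Filter.Tendsto (fun k => G^[k] x0) Filter.atTop (nhds xstar) := by
  -- Nonempty instances
  haveI hnl : Nonempty (Fin l) := ⟨⟨0, hl⟩⟩
  haveI hnm : Nonempty (Fin m) := ⟨⟨0, hm⟩⟩
  haveI hny : Nonempty (Fin y) := ⟨⟨0, hy⟩⟩
  haveI hnw : Nonempty (Fin w) := ⟨⟨0, hw⟩⟩
  set Λ := specialization U Z Y W with hΛdef
  set M := origMatrix U Z Y W with hMdef
  have hMnn : ∀ i j, 0 ≤ M i j := by
    rintro (a | c) (b | d) <;>
      simp only [hMdef, origMatrix, Matrix.fromBlocks_apply₁₁, Matrix.fromBlocks_apply₁₂,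
        Matrix.fromBlocks_apply₂₁, Matrix.fromBlocks_apply₂₂, Matrix.sum_apply]
    · exact hU a b
    · exact Finset.sum_nonneg fun i _ => hY i a d
    · exact Finset.sum_nonneg fun j _ => hW j c b
    · exact hZ c d
  have hΛnn : ∀ i j, 0 ≤ Λ i j := by
    rintro (a | ⟨⟨i, j⟩, c⟩) (b | ⟨⟨i', j'⟩, c'⟩) <;>
      simp only [hΛdef, specialization]
    · exact hU a b
    · exact hY i' a c'
    · exact hW j c b
    · split
      · exact hZ c c'
      · exact le_refl 0
  obtain ⟨v, hv, hMv⟩ := exists_subinv M hMnn hρ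
  have goal1 : specRad Λ < 1 := by
    apply fold_max_lt one_pos
    intro r hr
    obtain ⟨μ, hμroot, rfl⟩ := Multiset.mem_map.mp hr
    obtain ⟨x, hx0, hx⟩ := exists_eigenvec hμroot
    have habs := fun k => abs_eigen_ineq hΛnn hx k
    set ξ : Fin l → ℝ := fun a => ‖x (Sum.inl a)‖ with hξ
    have hyne : (Finset.univ : Finset (Fin y)).Nonempty := Finset.univ_nonempty
    set mj : Fin w → Fin m → ℝ := fun j c =>
      Finset.univ.sup' hyne (fun i : Fin y => ‖x (Sum.inr ((i, j), c))‖) with hmj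
    set u : (Fin l ⊕ Fin m) → ℝ := Sum.elim ξ (fun c => ∑ j, mj j c) with hu
    have hmj_le : ∀ i j c, ‖x (Sum.inr ((i, j), c))‖ ≤ mj j c := fun i j c =>
      Finset.le_sup' (f := fun i : Fin y => ‖x (Sum.inr ((i, j), c))‖) (Finset.mem_univ i)
    have hmj_nonneg : ∀ j c, 0 ≤ mj j c := by
      intro j c
      obtain ⟨i0⟩ := hny
      exact le_trans (norm_nonneg _) (hmj_le i0 j c)
    have hunn : ∀ k, 0 ≤ u k := by
      rintro (a | c)
      · simpa [hu, hξ] using norm_nonneg _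
      · simpa [hu] using Finset.sum_nonneg fun j _ => hmj_nonneg j c
    have hune : u ≠ 0 := by
      obtain ⟨k, hk⟩ := Function.ne_iff.mp hx0
      rcases k with a | ⟨⟨i, j⟩, c⟩
      · intro h0
        apply hk
        have : u (Sum.inl a) = 0 := by rw [h0]; rfl
        simp only [hu, Sum.elim_inl, hξ] at this
        exact norm_eq_zero.mp this
      · intro h0
        apply hk
        have h1 : u (Sum.inr c) = 0 := by rw [h0]; rfl
        simp only [hu, Sum.elim_inr] at h1
        have h2 : mj j c = 0 := by
          have hle : mj j c ≤ ∑ j', mj j' c :=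
            Finset.single_le_sum (fun j' _ => hmj_nonneg j' c) (Finset.mem_univ j)
          have := hmj_nonneg j c
          linarith
        have h3 : ‖x (Sum.inr ((i, j), c))‖ = 0 := by
          have := hmj_le i j c
          have := norm_nonneg (x (Sum.inr ((i, j), c)))
          linarith
        exact norm_eq_zero.mp h3
    -- mulVec values of M
    have hMu_l : ∀ a, (M *ᵥ u) (Sum.inl a)
        = (∑ b, U a b * ξ b) + ∑ c, (∑ i, Y i a c) * (∑ j, mj j c) := by
      intro a
      simp [Matrix.mulVec, dotProduct, Fintype.sum_sum_type, hMdef, origMatrix,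
        Matrix.sum_apply, hu]
    have hMu_r : ∀ c, (M *ᵥ u) (Sum.inr c)
        = (∑ b, (∑ j, W j c b) * ξ b) + ∑ c', Z c c' * (∑ j, mj j c') := by
      intro c
      simp [Matrix.mulVec, dotProduct, Fintype.sum_sum_type, hMdef, origMatrix,
        Matrix.sum_apply, hu]
    have hru : ∀ k, ‖μ‖ * u k ≤ (M *ᵥ u) k := by
      rintro (a | c)
      · -- row in B
        have h := habs (Sum.inl a)
        rw [Fintype.sum_sum_type] at h
        have hA1 : (∑ b, Λ (Sum.inl a) (Sum.inl b) * ‖x (Sum.inl b)‖)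
            = ∑ b, U a b * ξ b := by
          simp [hΛdef, specialization, hξ]
        have hB1 : (∑ q : (Fin y × Fin w) × Fin m,
              Λ (Sum.inl a) (Sum.inr q) * ‖x (Sum.inr q)‖)
            = ∑ i, ∑ j : Fin w, ∑ c, Y i a c * ‖x (Sum.inr ((i, j), c))‖ := by
          rw [Fintype.sum_prod_type, Fintype.sum_prod_type]
          simp [hΛdef, specialization]
        have hB2 : (∑ i, ∑ j : Fin w, ∑ c, Y i a c * ‖x (Sum.inr ((i, j), c))‖)
            ≤ ∑ i, ∑ j : Fin w, ∑ c, Y i a c * mj j c := by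
          refine Finset.sum_le_sum fun i _ => Finset.sum_le_sum fun j _ =>
            Finset.sum_le_sum fun c _ => ?_
          exact mul_le_mul_of_nonneg_left (hmj_le i j c) (hY i a c)
        have hB3 : (∑ i, ∑ j : Fin w, ∑ c, Y i a c * mj j c)
            = ∑ c, (∑ i, Y i a c) * (∑ j, mj j c) := by
          have e1 : ∀ i : Fin y, (∑ j : Fin w, ∑ c, Y i a c * mj j c)
              = ∑ c, ∑ j : Fin w, Y i a c * mj j c := fun i => Finset.sum_comm
          simp only [e1]
          rw [Finset.sum_comm]
          refine Finset.sum_congr rfl fun c _ => ?_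
          rw [Finset.sum_mul_sum]
        have hle : ‖μ‖ * u (Sum.inl a) ≤ (∑ b, U a b * ξ b)
            + ∑ c, (∑ i, Y i a c) * (∑ j, mj j c) := by
          have : ‖μ‖ * ξ a ≤ (∑ b, U a b * ξ b)
              + ∑ c, (∑ i, Y i a c) * (∑ j, mj j c) := by
            calc ‖μ‖ * ξ a
                ≤ (∑ b, Λ (Sum.inl a) (Sum.inl b) * ‖x (Sum.inl b)‖)
                  + ∑ q : (Fin y × Fin w) × Fin m,
                      Λ (Sum.inl a) (Sum.inr q) * ‖x (Sum.inr q)‖ := h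
              _ ≤ (∑ b, U a b * ξ b) + ∑ c, (∑ i, Y i a c) * (∑ j, mj j c) := by
                  rw [hA1, hB1]
                  exact add_le_add_right (le_of_le_of_eq hB2 hB3) _
          simpa [hu] using this
        rw [hMu_l]
        exact hle
      · -- row in C
        have hjc : ∀ j c', ‖μ‖ * mj j c'
            ≤ (∑ b, W j c' b * ξ b) + ∑ c2, Z c' c2 * mj j c2 := by
          intro j c'
          obtain ⟨i0, -, hi0⟩ := Finset.exists_mem_eq_sup' hyne
            (fun i : Fin y => ‖x (Sum.inr ((i, j), c'))‖)
          have h := habs (Sum.inr ((i0, j), c'))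
          rw [Fintype.sum_sum_type] at h
          have hA1 : (∑ b, Λ (Sum.inr ((i0, j), c')) (Sum.inl b) * ‖x (Sum.inl b)‖)
              = ∑ b, W j c' b * ξ b := by
            simp [hΛdef, specialization, hξ]
          have hB1 : (∑ q : (Fin y × Fin w) × Fin m,
                Λ (Sum.inr ((i0, j), c')) (Sum.inr q) * ‖x (Sum.inr q)‖)
              = ∑ c2, Z c' c2 * ‖x (Sum.inr ((i0, j), c2))‖ := by
            rw [Fintype.sum_prod_type]
            rw [Finset.sum_eq_single ((i0 : Fin y), (j : Fin w))]
            · simp [hΛdef, specialization]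
            · intro p _ hp
              apply Finset.sum_eq_zero
              intro c2 _
              have : Λ (Sum.inr ((i0, j), c')) (Sum.inr (p, c2)) = 0 := by
                obtain ⟨pi, pj⟩ := p
                simp only [hΛdef, specialization]
                rw [if_neg]
                exact fun hcon => hp (by simpa using hcon.symm)
              rw [this, zero_mul]
            · intro hmem
              exact absurd (Finset.mem_univ _) hmem
          have hB2 : (∑ c2, Z c' c2 * ‖x (Sum.inr ((i0, j), c2))‖)
              ≤ ∑ c2, Z c' c2 * mj j c2 :=
            Finset.sum_le_sum fun c2 _ =>
              mul_le_mul_of_nonneg_left (hmj_le i0 j c2) (hZ c' c2)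
          calc ‖μ‖ * mj j c' = ‖μ‖ * ‖x (Sum.inr ((i0, j), c'))‖ :=
                congrArg (fun t => ‖μ‖ * t) hi0
            _ ≤ _ := h
            _ ≤ (∑ b, W j c' b * ξ b) + ∑ c2, Z c' c2 * mj j c2 := by
                rw [hA1, hB1] at *
                exact add_le_add_right hB2 _
        have hsum : ‖μ‖ * u (Sum.inr c)
            ≤ ∑ j, ((∑ b, W j c b * ξ b) + ∑ c2, Z c c2 * mj j c2) := by
          have : ‖μ‖ * u (Sum.inr c) = ∑ j, ‖μ‖ * mj j c := by
            simp [hu, Finset.mul_sum]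
          rw [this]
          exact Finset.sum_le_sum fun j _ => hjc j c
        rw [hMu_r]
        refine le_trans hsum (le_of_eq ?_)
        rw [Finset.sum_add_distrib]
        congr 1
        · rw [Finset.sum_comm]
          refine Finset.sum_congr rfl fun b _ => ?_
          rw [Finset.sum_mul]
        · rw [Finset.sum_comm]
          refine Finset.sum_congr rfl fun c2 _ => ?_
          rw [Finset.mul_sum]
    exact ratio_lt_one hv hMv hMnn hunn hune hru
  refine ⟨goal1, ?_⟩
  -- Part 2: dynamics
  haveI hκne : Nonempty (Fin l ⊕ ((Fin y × Fin w) × Fin m)) := ⟨Sum.inl ⟨0, hl⟩⟩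
  obtain ⟨vh, hvh, hΛvh⟩ := exists_subinv Λ hΛnn goal1
  have hκuniv : (Finset.univ : Finset (Fin l ⊕ ((Fin y × Fin w) × Fin m))).Nonempty :=
    Finset.univ_nonempty
  set c0 : ℝ := Finset.univ.sup' hκuniv (fun i => (Λ *ᵥ vh) i / vh i) with hc0
  have hc0_lt : c0 < 1 := by
    rw [hc0, Finset.sup'_lt_iff]
    intro i _
    rw [div_lt_one (hvh i)]
    exact hΛvh i
  have hΛv_nonneg : ∀ i, 0 ≤ (Λ *ᵥ vh) i := fun i =>
    Finset.sum_nonneg fun j _ => mul_nonneg (hΛnn i j) (le_of_lt (hvh j))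
  have hc0_nonneg : 0 ≤ c0 := by
    obtain ⟨i0⟩ := hκne
    exact le_trans (div_nonneg (hΛv_nonneg i0) (le_of_lt (hvh i0)))
      (Finset.le_sup' (f := fun i => (Λ *ᵥ vh) i / vh i) (Finset.mem_univ i0))
  have hkey : ∀ i, (Λ *ᵥ vh) i ≤ c0 * vh i := by
    intro i
    rw [← div_le_iff₀ (hvh i)]
    exact Finset.le_sup' (f := fun i => (Λ *ᵥ vh) i / vh i) (Finset.mem_univ i)
  set S : (Fin l ⊕ ((Fin y × Fin w) × Fin m)) → Set ℝ := fun i => {t : ℝ | vh i * t ∈ X i}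
    with hS
  have hvne : ∀ i, vh i ≠ 0 := fun i => ne_of_gt (hvh i)
  have hScl : ∀ i, IsClosed (S i) := by
    intro i
    have : S i = (fun t => vh i * t) ⁻¹' (X i) := rfl
    rw [this]
    exact (hXcl i).preimage (continuous_const.mul continuous_id)
  haveI hScomp : ∀ i, CompleteSpace (S i) := fun i => (hScl i).completeSpace_coe
  haveI hSne : Nonempty (∀ i, S i) := by
    refine ⟨fun i => ⟨(hXne i).choose / vh i, ?_⟩⟩
    show vh i * ((hXne i).choose / vh i) ∈ X i
    rw [mul_comm, div_mul_cancel₀ _ (hvne i)]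
    exact (hXne i).choose_spec
  -- the conjugated map
  have hmem : ∀ (x : ∀ i, S i) (j), vh j * (x j : ℝ) ∈ X j := fun x j => (x j).2
  set F : (∀ i, S i) → (∀ i, S i) := fun x i =>
    ⟨G (fun j => vh j * (x j : ℝ)) i / vh i, by
      show vh i * (G (fun j => vh j * (x j : ℝ)) i / vh i) ∈ X i
      rw [mul_comm, div_mul_cancel₀ _ (hvne i)]
      exact hG _ (hmem x) i⟩ with hF
  have hFdist : ∀ x x', dist (F x) (F x') ≤ c0 * dist x x' := by
    intro x x'
    rw [dist_pi_le_iff (mul_nonneg hc0_nonneg dist_nonneg)]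
    intro i
    have h1 : dist (F x i) (F x' i)
        = |G (fun j => vh j * (x j : ℝ)) i - G (fun j => vh j * (x' j : ℝ)) i| / vh i := by
      rw [Subtype.dist_eq, Real.dist_eq]
      rw [div_sub_div_same, abs_div, abs_of_pos (hvh i)]
    rw [h1, div_le_iff₀ (hvh i)]
    have h2 := hLip (fun j => vh j * (x j : ℝ)) (fun j => vh j * (x' j : ℝ))
      (hmem x) (hmem x') i
    refine le_trans h2 ?_
    have h3 : ∀ j, specialization U Z Y W i j * |vh j * (x j : ℝ) - vh j * (x' j : ℝ)|
        ≤ Λ i j * vh j * dist x x' := by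
      intro j
      have : |vh j * (x j : ℝ) - vh j * (x' j : ℝ)| = vh j * dist (x j) (x' j) := by
        rw [← mul_sub, abs_mul, abs_of_pos (hvh j), Subtype.dist_eq, Real.dist_eq]
      rw [this, ← hΛdef, mul_assoc]
      refine mul_le_mul_of_nonneg_left ?_ (hΛnn i j)
      exact mul_le_mul_of_nonneg_left (dist_le_pi_dist x x' j) (le_of_lt (hvh j))
    refine le_trans (Finset.sum_le_sum fun j _ => h3 j) ?_
    have h4 : (∑ j, Λ i j * vh j * dist x x') = (Λ *ᵥ vh) i * dist x x' := by
      rw [Matrix.mulVec, dotProduct, Finset.sum_mul]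
    rw [h4]
    calc (Λ *ᵥ vh) i * dist x x' ≤ (c0 * vh i) * dist x x' :=
          mul_le_mul_of_nonneg_right (hkey i) dist_nonneg
      _ = c0 * dist x x' * vh i := by ring
  set c : NNReal := ⟨c0, hc0_nonneg⟩ with hc
  have hcontr : ContractingWith c F := by
    constructor
    · exact_mod_cast hc0_lt
    · exact LipschitzWith.of_dist_le_mul (by exact_mod_cast hFdist)
  set fp : ∀ i, S i := ContractingWith.fixedPoint F hcontr with hfp
  have hfix : F fp = fp := ContractingWith.fixedPoint_isFixedPt hcontr
  set xstar : (Fin l ⊕ ((Fin y × Fin w) × Fin m)) → ℝ := fun i => vh i * (fp i : ℝ) with hxstar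
  set φ : (∀ i, S i) → ((Fin l ⊕ ((Fin y × Fin w) × Fin m)) → ℝ) :=
    fun z i => vh i * (z i : ℝ) with hφ
  have hsemi : ∀ z, φ (F z) = G (φ z) := by
    intro z
    funext i
    show vh i * (G (fun j => vh j * (z j : ℝ)) i / vh i) = G (fun j => vh j * (z j : ℝ)) i
    rw [mul_comm, div_mul_cancel₀ _ (hvne i)]
  have hsemiconj : Function.Semiconj φ F G := hsemi
  have hcontφ : Continuous φ := by
    refine continuous_pi fun i => ?_
    exact continuous_const.mul (continuous_subtype_val.comp (continuous_apply i))
  refine ⟨xstar, fun i => ?_, ?_, ?_⟩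
  · exact (fp i).2
  · rw [← hsemi fp, hfix]
  · intro x0 hx0
    set x0' : ∀ i, S i := fun i => ⟨x0 i / vh i, by
      show vh i * (x0 i / vh i) ∈ X i
      rw [mul_comm, div_mul_cancel₀ _ (hvne i)]
      exact hx0 i⟩ with hx0'
    have hφx0 : φ x0' = x0 := by
      funext i
      show vh i * (x0 i / vh i) = x0 i
      rw [mul_comm, div_mul_cancel₀ _ (hvne i)]
    have hiter : ∀ k, G^[k] x0 = φ (F^[k] x0') := by
      intro k
      rw [← hφx0]
      exact ((hsemiconj.iterate_right k).eq x0').symm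
    have htend := ContractingWith.tendsto_iterate_fixedPoint hcontr x0'
    have := (hcontφ.tendsto fp).comp htend
    simp only [Function.comp_def] at this
    have hfinal : Filter.Tendsto (fun k => φ (F^[k] x0')) Filter.atTop (nhds xstar) := this
    refine Filter.Tendsto.congr (fun k => (hiter k).symm) hfinal
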